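/- arXiv:1605.05123 — 6 statements merged into one kernel-verified Lean document; each statement's English description precedes it below -/
import Mathlib

section
/- Let G be a simple graph on a vertex type V, and let c, v be distinct vertices of G that are not adjacent in G. Then in the graph G+(c,v), the infimum (in ℕ∞) of the lengths of cycles containing the edge {c,v} equals dist_G(c,v) + 1; in particular it is ∞ exactly when c and v lie in different connected components of G. -/
open SimpleGraph

variable {V : Type*}

/-- `G + (c,v)`: the graph obtained from `G` by adding the edge `{c, v}`. -/
def addEdge (G : SimpleGraph V) (c v : V) : SimpleGraph V :=
  G ⊔ SimpleGraph.fromEdgeSet {s(c, v)}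

/-- The local girth of a vertex `v`: the infimum (in `ℕ∞`) of the lengths of
cycles of `G` passing through `v`. -/
noncomputable def localGirth (G : SimpleGraph V) (v : V) : ℕ∞ :=
  ⨅ (a : V) (w : G.Walk a a) (_ : w.IsCycle) (_ : v ∈ w.support), (w.length : ℕ∞)

/-- The edge local girth of `e`: the infimum (in `ℕ∞`) of the lengths of
cycles of `G` containing the edge `e`. -/
noncomputable def edgeLocalGirth (G : SimpleGraph V) (e : Sym2 V) : ℕ∞ :=
  ⨅ (a : V) (w : G.Walk a a) (_ : w.IsCycle) (_ : e ∈ w.edges), (w.length : ℕ∞)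

/-- A length-`r` valid sequence for `v` in `G`: pairwise distinct vertices,
each distinct from `v` and not adjacent to `v` in `G`. -/
def ValidSeq (G : SimpleGraph V) (v : V) {r : ℕ} (s : Fin r → V) : Prop :=
  Function.Injective s ∧ ∀ i, s i ≠ v ∧ ¬ G.Adj (s i) v

/-- The graph sequence of a sequence `s`: `graphSeq G v s 0 = G₁ = G` and
`graphSeq G v s i = G_{i+1} = G_i + (s_i, v)`. -/
def graphSeq (G : SimpleGraph V) (v : V) {r : ℕ} (s : Fin r → V) : ℕ → SimpleGraph V
  | 0 => G
  | i + 1 => if h : i < r then addEdge (graphSeq G v s i) (s ⟨i, h⟩) v else graphSeq G v s i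

/-- The `r`-edge local girth of `v` in `G`: the supremum, over all length-`r`
valid sequences `s` for `v`, of the local girth of `v` in the final graph. -/
noncomputable def multiEdgeLocalGirth (G : SimpleGraph V) (v : V) (r : ℕ) : ℕ∞ :=
  ⨆ (s : Fin r → V) (_ : ValidSeq G v s), localGirth (graphSeq G v s r) v

/-- The `r`-edge local girth of `c` with respect to `v`:
`g_v(G+(c,v))` if `r = 1`, and `g_v^{(r-1)}(G+(c,v))` if `r ≥ 2`. -/
noncomputable def cnMultiEdgeLocalGirth (G : SimpleGraph V) (c v : V) (r : ℕ) : ℕ∞ :=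
  if r = 1 then localGirth (addEdge G c v) v
  else multiEdgeLocalGirth (addEdge G c v) v (r - 1)

lemma mem_edgeSet_of_ne {G : SimpleGraph V} {c v : V} {e : Sym2 V}
    (he : e ∈ (addEdge G c v).edgeSet) (hne : e ≠ s(c, v)) : e ∈ G.edgeSet := by
  rw [addEdge, edgeSet_sup, edgeSet_fromEdgeSet] at he
  rcases he with h | h
  · exact h
  · exact absurd h.1 (by simpa using hne)

lemma exists_G_walk {G : SimpleGraph V} {c v x y : V}
    (p : (addEdge G c v).Walk x y) (hp : s(c, v) ∉ p.edges) :
    ∃ q : G.Walk x y, q.length = p.length := by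
  refine ⟨p.transfer G (fun e he => mem_edgeSet_of_ne (p.edges_subset_edgeSet he) ?_),
    Walk.length_transfer _ _⟩
  rintro rfl; exact hp he

lemma first_dart_aux {G' : SimpleGraph V} {c v b : V} (hne : v ≠ c)
    (q : G'.Walk v b) (hn : q.support.Nodup) (he : s(c, v) ∈ q.edges) :
    ∃ (h : G'.Adj v c) (q' : G'.Walk c b), q = Walk.cons h q' := by
  cases q with
  | nil => simp at he
  | @cons _ x _ h p =>
    rw [Walk.edges_cons, List.mem_cons] at he
    rw [Walk.support_cons, List.nodup_cons] at hn
    rcases he with he | he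
    · rcases Sym2.eq_iff.mp he with ⟨h1, _⟩ | ⟨h2, _⟩
      · exact absurd h1 hne.symm
      · subst h2; exact ⟨h, p, rfl⟩
    · rw [Sym2.eq_swap] at he
      exact absurd (p.fst_mem_support_of_mem_edges he) hn.1

lemma key_extract {G : SimpleGraph V} {c v : V} (hne : c ≠ v) {a : V}
    (w : (addEdge G c v).Walk a a) (hc : w.IsCycle) (he : s(c, v) ∈ w.edges) :
    ∃ q : G.Walk c v, q.length + 1 = w.length := by
  classical
  have hv : v ∈ w.support := w.snd_mem_support_of_mem_edges he
  have hlen : (w.rotate v hv).length = w.length := by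
    have := (w.rotate_edges v hv).perm.length_eq
    simpa [Walk.length_edges] using this
  have hc' := hc.rotate hv
  have he' : s(c, v) ∈ (w.rotate v hv).edges := (w.rotate_edges v hv).perm.mem_iff.mpr he
  revert hc' he' hlen
  generalize w.rotate v hv = w'
  intro hlen hc' he'
  cases w' with
  | nil => simp at he'
  | @cons _ x _ h p =>
    have hnodup_e : (Walk.cons h p).edges.Nodup := hc'.edges_nodup
    rw [Walk.edges_cons, List.nodup_cons] at hnodup_e
    rw [Walk.edges_cons, List.mem_cons] at he'
    rw [Walk.length_cons] at hlen
    have hnod : p.support.Nodup := by simpa using hc'.support_nodup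
    by_cases hf : s(v, x) = s(c, v)
    · rcases Sym2.eq_iff.mp hf with ⟨h1, _⟩ | ⟨_, h2⟩
      · exact absurd h1.symm hne
      · obtain rfl : c = x := h2.symm
        have hnp : s(c, v) ∉ p.edges := hf ▸ hnodup_e.1
        obtain ⟨q, hq⟩ := exists_G_walk p hnp
        exact ⟨q, by omega⟩
    · have hep : s(c, v) ∈ p.edges := he'.resolve_left (fun h' => hf h'.symm)
      have hrn : p.reverse.support.Nodup := by
        rw [Walk.support_reverse]; exact List.nodup_reverse.mpr hnod
      have hre : s(c, v) ∈ p.reverse.edges := by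
        rw [Walk.edges_reverse]; exact List.mem_reverse.mpr hep
      obtain ⟨hvc, q', hq'⟩ := first_dart_aux (fun hvc => hne hvc.symm) p.reverse hrn hre
      have hrev_nodup : p.reverse.edges.Nodup := by
        rw [Walk.edges_reverse]; exact List.nodup_reverse.mpr hnodup_e.2
      rw [hq', Walk.edges_cons, List.nodup_cons] at hrev_nodup
      have hq'crop : s(c, v) ∉ q'.edges := by
        intro hm; exact hrev_nodup.1 (by rwa [Sym2.eq_swap])
      have hcand : s(c, v) ∉ (q'.concat h.symm).edges := by
        rw [Walk.edges_concat]
        simp only [List.concat_eq_append, List.mem_append, List.mem_singleton]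
        rintro (hm | hm)
        · exact hq'crop hm
        ·
          exact hf (by rw [Sym2.eq_swap]; exact hm.symm)
      obtain ⟨q, hq⟩ := exists_G_walk (q'.concat h.symm) hcand
      refine ⟨q, ?_⟩
      have h1 : (q'.concat h.symm).length = q'.length + 1 := Walk.length_concat _ _
      have h2 : p.reverse.length = q'.length + 1 := by rw [hq', Walk.length_cons]
      have h3 : p.reverse.length = p.length := Walk.length_reverse _
      omega

/-- For distinct non-adjacent vertices `c, v` of `G`, in `G+(c,v)` the
infimum of the lengths of cycles containing the edge `{c,v}` equals `dist_G(c,v) + 1`;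
in particular it is `∞` exactly when `c` and `v` are in different connected components. -/
theorem stmt_0 (G : SimpleGraph V) (c v : V) (hne : c ≠ v) (hadj : ¬ G.Adj c v) :
    edgeLocalGirth (addEdge G c v) s(c, v) = G.edist c v + 1 ∧
    (edgeLocalGirth (addEdge G c v) s(c, v) = ⊤ ↔ ¬ G.Reachable c v) := by
  classical
  have hvc : (addEdge G c v).Adj v c := by
    refine Or.inr ?_
    rw [fromEdgeSet_adj]
    exact ⟨by rw [Sym2.eq_swap]; rfl, hne.symm⟩
  have main : edgeLocalGirth (addEdge G c v) s(c, v) = G.edist c v + 1 := by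
    apply le_antisymm
    · by_cases hr : G.Reachable c v
      · obtain ⟨p, hp⟩ := hr.exists_walk_length_eq_edist
        have hpath := p.bypass_isPath
        have hlen : (p.bypass.length : ℕ∞) = G.edist c v := by
          apply le_antisymm
          · rw [← hp]; exact_mod_cast p.length_bypass_le
          · exact G.edist_le p.bypass
        have hsub : ∀ e ∈ p.bypass.edges, e ∈ (addEdge G c v).edgeSet :=
          fun e he => edgeSet_mono (le_sup_left : G ≤ addEdge G c v)
            (p.bypass.edges_subset_edgeSet he)
        have hp'path : (p.bypass.transfer _ hsub).IsPath := hpath.transfer hsub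
        have hnotin : s(v, c) ∉ (p.bypass.transfer _ hsub).edges := by
          rw [Walk.edges_transfer]
          intro hmem
          have := p.bypass.edges_subset_edgeSet hmem
          rw [mem_edgeSet] at this
          exact hadj this.symm
        have hcyc : (Walk.cons hvc (p.bypass.transfer _ hsub)).IsCycle :=
          Path.cons_isCycle ⟨_, hp'path⟩ hvc hnotin
        have hmem : s(c, v) ∈ (Walk.cons hvc (p.bypass.transfer _ hsub)).edges := by
          rw [Walk.edges_cons]
          exact List.mem_cons.mpr (Or.inl Sym2.eq_swap)
        calc edgeLocalGirth (addEdge G c v) s(c, v)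
            ≤ ((Walk.cons hvc (p.bypass.transfer _ hsub)).length : ℕ∞) :=
              iInf_le_of_le v (iInf_le_of_le _ (iInf_le_of_le hcyc (iInf_le _ hmem)))
          _ = G.edist c v + 1 := by
              rw [Walk.length_cons, Walk.length_transfer]
              push_cast
              rw [hlen]
      · simp [edist_eq_top_of_not_reachable hr]
    · refine le_iInf fun a => le_iInf fun w => le_iInf fun hcyc => le_iInf fun hmem => ?_
      obtain ⟨q, hq⟩ := key_extract hne w hcyc hmem
      calc G.edist c v + 1 ≤ (q.length : ℕ∞) + 1 := add_le_add_left (G.edist_le q) 1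
        _ = (w.length : ℕ∞) := by rw [← hq]; push_cast; ring
  refine ⟨main, ?_⟩
  rw [main]
  constructor
  · intro h
    by_contra hr
    have h1 : G.edist c v ≠ ⊤ := edist_ne_top_iff_reachable.mpr hr
    lift G.edist c v to ℕ using h1 with n hn
    rw [← Nat.cast_one, ← Nat.cast_add] at h
    exact ENat.coe_ne_top _ h
  · intro hr
    rw [edist_eq_top_of_not_reachable hr]
    simp
end

section
/- Let G be a simple graph, v a vertex, c a vertex with c ≠ v and ¬G.Adj c v, and x any vertex. Then dist_{G+(c,v)}(x, v) = min( dist_G(x, v), dist_G(x, c) + 1 ) in ℕ∞. -/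
open SimpleGraph

variable {V : Type*}

lemma stmt2_aux (G : SimpleGraph V) (v c : V) (H : SimpleGraph V)
    (hH : ∀ a b : V, H.Adj a b → G.Adj a b ∨ s(a, b) = s(c, v)) :
    ∀ (x d : V) (w : H.Walk x d), d = v →
      min (G.edist x v) (G.edist x c + 1) ≤ (w.length : ℕ∞) := by
  intro x d w
  induction w with
  | nil =>
    rintro rfl
    simp only [SimpleGraph.Walk.length_nil, Nat.cast_zero]
    exact min_le_left _ _ |>.trans_eq (G.edist_self)
  | @cons a b d h p ih =>
    rintro rfl
    have key := ih rfl
    have hlen : ((SimpleGraph.Walk.cons h p).length : ℕ∞) = (p.length : ℕ∞) + 1 := by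
      simp [SimpleGraph.Walk.length_cons]
    rw [hlen]
    rcases hH _ _ h with hG | hF
    · have hxy : G.edist a b = 1 := SimpleGraph.edist_eq_one_iff_adj.mpr hG
      have h1 : G.edist a d ≤ G.edist b d + 1 := by
        calc G.edist a d ≤ G.edist a b + G.edist b d := SimpleGraph.edist_triangle
        _ = G.edist b d + 1 := by rw [hxy, add_comm]
      have h2 : G.edist a c + 1 ≤ (G.edist b c + 1) + 1 := by
        gcongr
        calc G.edist a c ≤ G.edist a b + G.edist b c := SimpleGraph.edist_triangle
        _ = G.edist b c + 1 := by rw [hxy, add_comm]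
      calc min (G.edist a d) (G.edist a c + 1)
          ≤ min (G.edist b d + 1) ((G.edist b c + 1) + 1) := min_le_min h1 h2
        _ = min (G.edist b d) (G.edist b c + 1) + 1 := by
            rw [min_add_add_right]
        _ ≤ (p.length : ℕ∞) + 1 := by gcongr
    · rw [Sym2.eq_iff] at hF
      rcases hF with ⟨rfl, rfl⟩ | ⟨rfl, rfl⟩
      · calc min (G.edist a b) (G.edist a a + 1) ≤ G.edist a a + 1 := min_le_right _ _
          _ = 1 := by rw [G.edist_self, zero_add]
          _ ≤ (p.length : ℕ∞) + 1 := le_add_self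
      · calc min (G.edist a a) (G.edist a b + 1) ≤ G.edist a a := min_le_left _ _
          _ = 0 := G.edist_self
          _ ≤ _ := zero_le'

/-- For `c ≠ v` non-adjacent in `G` and any vertex `x`,
`dist_{G+(c,v)}(x, v) = min(dist_G(x, v), dist_G(x, c) + 1)` in `ℕ∞`. -/
theorem stmt_2 (G : SimpleGraph V) (v c : V) (hne : c ≠ v) (hadj : ¬ G.Adj c v) (x : V) :
    (addEdge G c v).edist x v = min (G.edist x v) (G.edist x c + 1) := by
  have hle : G ≤ addEdge G c v := le_sup_left
  apply le_antisymm
  · apply le_min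
    · exact SimpleGraph.edist_anti hle
    · have hcv : (addEdge G c v).Adj c v :=
        Or.inr ((SimpleGraph.fromEdgeSet_adj _).mpr ⟨rfl, hne⟩)
      have h1 : (addEdge G c v).edist c v = 1 := SimpleGraph.edist_eq_one_iff_adj.mpr hcv
      calc (addEdge G c v).edist x v
          ≤ (addEdge G c v).edist x c + (addEdge G c v).edist c v := SimpleGraph.edist_triangle
        _ = (addEdge G c v).edist x c + 1 := by rw [h1]
        _ ≤ G.edist x c + 1 := by gcongr
  · rw [SimpleGraph.edist_eq_sInf]
    apply le_sInf
    rintro b ⟨w, rfl⟩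
    refine stmt2_aux G v c _ ?_ x v w rfl
    rintro a b (h | h)
    · exact Or.inl h
    · exact Or.inr ((SimpleGraph.fromEdgeSet_adj _).mp h).1
end

section
/- Let G be a simple graph, v a vertex, and (s_1, …, s_r) a length-r valid sequence for v in G with graph sequence G_1 = G, G_{i+1} = G_i + (s_i, v). Then the local girth of v in the final graph satisfies g_v(G_{r+1}) = min( g_v(G), min_{1 ≤ i ≤ r} g_{{s_i,v}}(G_{i+1}) ), and moreover for each 1 ≤ i ≤ r the edge local girth satisfies g_{{s_i,v}}(G_{i+1}) = dist_{G_i}(s_i, v) + 1. -/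
open SimpleGraph

variable {V : Type*}

lemma addEdge_adj (H : SimpleGraph V) (c v a b : V) :
    (addEdge H c v).Adj a b ↔ H.Adj a b ∨ (s(a, b) = s(c, v) ∧ a ≠ b) := by
  simp [addEdge]

lemma le_addEdge (H : SimpleGraph V) (c v : V) : H ≤ addEdge H c v := le_sup_left

lemma addEdge_adj' {H : SimpleGraph V} {c v : V} (hcv : c ≠ v) :
    (addEdge H c v).Adj c v := by
  rw [addEdge_adj]; exact Or.inr ⟨rfl, hcv⟩

-- a path starting at c with an edge containing c: the edge is the first edge
lemma path_first_edge {H : SimpleGraph V} {c v b : V} (p : H.Walk c b) (hp : p.IsPath)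
    (he : s(c, v) ∈ p.edges) (hcv : c ≠ v) :
    ∃ (h : H.Adj c v) (q : H.Walk v b), p = SimpleGraph.Walk.cons h q := by
  cases p with
  | nil => simp at he
  | cons h t =>
    rename_i x
    rw [SimpleGraph.Walk.edges_cons, List.mem_cons] at he
    rcases he with he | he
    · have hxv : v = x := by
        rw [Sym2.eq_iff] at he
        rcases he with ⟨-, h2⟩ | ⟨h1, h2⟩
        · exact h2
        · exact absurd h2.symm hcv
      subst hxv
      exact ⟨h, t, rfl⟩
    · exfalso
      have : c ∈ t.support := t.fst_mem_support_of_mem_edges he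
      rw [SimpleGraph.Walk.cons_isPath_iff] at hp
      exact hp.2 this

lemma localGirth_le {G : SimpleGraph V} {v a : V} {w : G.Walk a a} (hw : w.IsCycle)
    (hv : v ∈ w.support) : localGirth G v ≤ w.length :=
  iInf_le_of_le a (iInf_le_of_le w (iInf_le_of_le hw (iInf_le _ hv)))

lemma le_localGirth {G : SimpleGraph V} {v : V} {n : ℕ∞}
    (h : ∀ a (w : G.Walk a a), w.IsCycle → v ∈ w.support → n ≤ w.length) :
    n ≤ localGirth G v :=
  le_iInf fun a => le_iInf fun w => le_iInf fun hc => le_iInf fun hv => h a w hc hv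

lemma edgeLocalGirth_le {G : SimpleGraph V} {e : Sym2 V} {a : V} {w : G.Walk a a}
    (hw : w.IsCycle) (he : e ∈ w.edges) : edgeLocalGirth G e ≤ w.length :=
  iInf_le_of_le a (iInf_le_of_le w (iInf_le_of_le hw (iInf_le _ he)))

lemma le_edgeLocalGirth {G : SimpleGraph V} {e : Sym2 V} {n : ℕ∞}
    (h : ∀ a (w : G.Walk a a), w.IsCycle → e ∈ w.edges → n ≤ w.length) :
    n ≤ edgeLocalGirth G e :=
  le_iInf fun a => le_iInf fun w => le_iInf fun hc => le_iInf fun hv => h a w hc hv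

lemma edge_of_addEdge {H : SimpleGraph V} {c v : V} {f : Sym2 V}
    (hf : f ∈ (addEdge H c v).edgeSet) (hne : f ≠ s(c, v)) : f ∈ H.edgeSet := by
  induction f with
  | _ a b =>
    rw [SimpleGraph.mem_edgeSet, addEdge_adj] at hf
    rcases hf with hf | ⟨hf, -⟩
    · exact hf
    · exact absurd hf hne

/-- From a cycle through `c` containing the edge `s(c,v)` in `H + (c,v)`,
extract a walk from `c` to `v` in `H` of length one less. -/
lemma exists_walk_of_cycle {H : SimpleGraph V} {c v : V} (hcv : c ≠ v)
    (w : (addEdge H c v).Walk c c) (hw : w.IsCycle) (he : s(c, v) ∈ w.edges) :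
    ∃ p : H.Walk c v, p.length + 1 = w.length := by
  cases w with
  | nil => simp at he
  | cons h q =>
    rename_i b
    have hq : q.IsPath ∧ s(c, b) ∉ q.edges := (SimpleGraph.Walk.cons_isCycle_iff q h).mp hw
    rw [SimpleGraph.Walk.edges_cons, List.mem_cons] at he
    rcases he with he | he
    · -- first edge is s(c,v), so b = v
      have hbv : b = v := by
        rw [Sym2.eq_iff] at he
        rcases he with ⟨-, h2⟩ | ⟨h1, h2⟩
        · exact h2.symm
        · exact absurd h2.symm hcv
      subst hbv
      have hsub : ∀ f ∈ q.edges, f ∈ H.edgeSet := by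
        intro f hf
        refine edge_of_addEdge (q.edges_subset_edgeSet hf) ?_
        rintro rfl
        exact hq.2 hf
      refine ⟨(q.transfer H hsub).reverse, ?_⟩
      simp [SimpleGraph.Walk.length_reverse, SimpleGraph.Walk.length_transfer]
    · -- edge s(c,v) inside q : Walk b c; use q.reverse, a path from c to b
      have hqr : q.reverse.IsPath := hq.1.reverse
      have her : s(c, v) ∈ q.reverse.edges := by
        rw [SimpleGraph.Walk.edges_reverse, List.mem_reverse]; exact he
      obtain ⟨h', q'', heq⟩ := path_first_edge q.reverse hqr her hcv
      -- s(c,v) ∉ q''.edges since q.reverse is a trail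
      have hnotin : s(c, v) ∉ q''.edges := by
        have := hqr.isTrail.edges_nodup
        rw [heq, SimpleGraph.Walk.edges_cons, List.nodup_cons] at this
        exact this.1
      have hsub : ∀ f ∈ q''.edges, f ∈ H.edgeSet := by
        intro f hf
        refine edge_of_addEdge (q''.edges_subset_edgeSet hf) ?_
        rintro rfl
        exact hnotin hf
      -- first edge of the cycle, s(c,b), is in H
      have hcb : H.Adj c b := by
        have h1 : s(c, b) ∈ (addEdge H c v).edgeSet := h
        have h2 : s(c, b) ≠ s(c, v) := by
          intro hh
          -- s(c,b) = s(c,v) means b = v and he : s(c,v) ∈ q.edges = s(c,b) ∈ q.edges contra hq.2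
          have hb : b = v := by
            rcases Sym2.eq_iff.mp hh with ⟨-, h2⟩ | ⟨h1, -⟩
            · exact h2
            · exact absurd h1 hcv
          subst hb
          exact hq.2 he
        exact (SimpleGraph.mem_edgeSet H).mp (edge_of_addEdge h1 h2)
      refine ⟨SimpleGraph.Walk.cons hcb (q''.transfer H hsub).reverse, ?_⟩
      have hlen : q.reverse.length = q''.length + 1 := by
        rw [heq, SimpleGraph.Walk.length_cons]
      rw [SimpleGraph.Walk.length_reverse] at hlen
      simp [SimpleGraph.Walk.length_cons, SimpleGraph.Walk.length_reverse,
        SimpleGraph.Walk.length_transfer, hlen]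

lemma edgeLocalGirth_addEdge (H : SimpleGraph V) {c v : V} (hcv : c ≠ v)
    (hadj : ¬H.Adj c v) :
    edgeLocalGirth (addEdge H c v) s(c, v) = H.edist c v + 1 := by
  classical
  apply le_antisymm
  · rcases eq_or_ne (H.edist c v) ⊤ with htop | htop
    · rw [htop]
      simp
    · obtain ⟨p, hp⟩ := SimpleGraph.exists_walk_of_edist_ne_top htop
      have hpath : p.bypass.IsPath := p.bypass_isPath
      have hlen : (p.bypass.length : ℕ∞) = H.edist c v := by
        refine le_antisymm ?_ (SimpleGraph.edist_le _)
        rw [← hp]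
        exact_mod_cast p.length_bypass_le
      set p' := p.bypass with hp'def
      have hsub : ∀ f ∈ p'.edges, f ∈ (addEdge H c v).edgeSet :=
        fun f hf => SimpleGraph.edgeSet_mono (le_addEdge H c v) (p'.edges_subset_edgeSet hf)
      let p'' := p'.transfer (addEdge H c v) hsub
      have hvc : (addEdge H c v).Adj v c := (addEdge_adj' hcv).symm
      have hcyc : (SimpleGraph.Walk.cons hvc p'').IsCycle := by
        rw [SimpleGraph.Walk.cons_isCycle_iff]
        refine ⟨hpath.transfer hsub, ?_⟩
        rw [SimpleGraph.Walk.edges_transfer]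
        intro hmem
        have : s(v, c) ∈ H.edgeSet := p'.edges_subset_edgeSet hmem
        rw [Sym2.eq_swap] at this
        exact hadj this
      have hmem : s(c, v) ∈ (SimpleGraph.Walk.cons hvc p'').edges := by
        rw [SimpleGraph.Walk.edges_cons, Sym2.eq_swap]
        exact List.mem_cons_self
      calc edgeLocalGirth (addEdge H c v) s(c, v)
          ≤ ((SimpleGraph.Walk.cons hvc p'').length : ℕ∞) := edgeLocalGirth_le hcyc hmem
        _ = H.edist c v + 1 := by
            rw [SimpleGraph.Walk.length_cons, SimpleGraph.Walk.length_transfer]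
            rw [← hlen]
            exact_mod_cast rfl
  · refine le_edgeLocalGirth fun a w hw hew => ?_
    have hc : c ∈ w.support := w.fst_mem_support_of_mem_edges hew
    have hw' : (w.rotate c hc).IsCycle := hw.rotate hc
    have hew' : s(c, v) ∈ (w.rotate c hc).edges := (w.rotate_edges c hc).mem_iff.mpr hew
    obtain ⟨p, hp⟩ := exists_walk_of_cycle hcv (w.rotate c hc) hw' hew'
    have hlen : (w.rotate c hc).length = w.length := by
      rw [← SimpleGraph.Walk.length_edges, ← SimpleGraph.Walk.length_edges]
      exact (w.rotate_edges c hc).perm.length_eq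
    have h1 : H.edist c v ≤ p.length := SimpleGraph.edist_le p
    calc H.edist c v + 1 ≤ (p.length : ℕ∞) + 1 := add_le_add_left h1 1
      _ = ((p.length + 1 : ℕ) : ℕ∞) := by push_cast; ring
      _ = (w.length : ℕ∞) := by rw [hp, hlen]

lemma graphSeq_adj (G : SimpleGraph V) (v : V) {r : ℕ} (s : Fin r → V) (i : ℕ) (a b : V) :
    (graphSeq G v s i).Adj a b ↔
      G.Adj a b ∨ ∃ j : Fin r, (j : ℕ) < i ∧ s(a, b) = s(s j, v) ∧ a ≠ b := by
  induction i with
  | zero =>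
    simp only [graphSeq]
    constructor
    · exact fun h => Or.inl h
    · rintro (h | ⟨j, hj, -⟩)
      · exact h
      · omega
  | succ i ih =>
    by_cases h : i < r
    · rw [show graphSeq G v s (i + 1) = addEdge (graphSeq G v s i) (s ⟨i, h⟩) v from dif_pos h]
      rw [addEdge_adj, ih]
      constructor
      · rintro ((hG | ⟨j, hj, he, hne⟩) | ⟨he, hne⟩)
        · exact Or.inl hG
        · exact Or.inr ⟨j, by omega, he, hne⟩
        · refine Or.inr ⟨⟨i, h⟩, by simp, he, hne⟩
      · rintro (hG | ⟨j, hj, he, hne⟩)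
        · exact Or.inl (Or.inl hG)
        · rcases Nat.lt_succ_iff_lt_or_eq.mp hj with hj' | hj'
          · exact Or.inl (Or.inr ⟨j, hj', he, hne⟩)
          · refine Or.inr ⟨?_, hne⟩
            have : j = ⟨i, h⟩ := Fin.ext hj'
            rw [← this]; exact he
    · rw [show graphSeq G v s (i + 1) = graphSeq G v s i from dif_neg h, ih]
      constructor
      · rintro (hG | ⟨j, hj, he, hne⟩)
        · exact Or.inl hG
        · exact Or.inr ⟨j, by omega, he, hne⟩
      · rintro (hG | ⟨j, hj, he, hne⟩)
        · exact Or.inl hG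
        · exact Or.inr ⟨j, by have := j.isLt; omega, he, hne⟩

lemma le_graphSeq (G : SimpleGraph V) (v : V) {r : ℕ} (s : Fin r → V) {i j : ℕ}
    (hij : i ≤ j) : graphSeq G v s i ≤ graphSeq G v s j := by
  intro a b hab
  rw [graphSeq_adj] at hab ⊢
  rcases hab with h | ⟨k, hk, he, hne⟩
  · exact Or.inl h
  · exact Or.inr ⟨k, by omega, he, hne⟩

lemma graphSeq_not_adj (G : SimpleGraph V) (v : V) {r : ℕ} {s : Fin r → V}
    (hs : ValidSeq G v s) (i : Fin r) : ¬(graphSeq G v s i.1).Adj (s i) v := by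
  rw [graphSeq_adj]
  rintro (h | ⟨j, hj, he, -⟩)
  · exact (hs.2 i).2 h
  · rcases Sym2.eq_iff.mp he with ⟨h1, -⟩ | ⟨h1, -⟩
    · have : i = j := hs.1 h1
      omega
    · exact (hs.2 i).1 h1

theorem main_eq (G : SimpleGraph V) (v : V) {r : ℕ} (hr : 1 ≤ r)
    (s : Fin r → V) (hs : ValidSeq G v s) :
    localGirth (graphSeq G v s r) v =
      min (localGirth G v)
        (⨅ i : Fin r, edgeLocalGirth (graphSeq G v s (i.1 + 1)) s(s i, v)) := by
  classical
  apply le_antisymm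
  · refine le_min ?_ ?_
    · refine le_iInf fun a => le_iInf fun w => le_iInf fun hc => le_iInf fun hv => ?_
      have hsub : ∀ f ∈ w.edges, f ∈ (graphSeq G v s r).edgeSet := fun f hf =>
        SimpleGraph.edgeSet_mono (le_graphSeq G v s (Nat.zero_le r))
          (w.edges_subset_edgeSet hf)
      have hv' : v ∈ (w.transfer _ hsub).support := by
        rw [SimpleGraph.Walk.support_transfer]; exact hv
      exact localGirth_le (hc.transfer hsub) hv' |>.trans
        (by rw [SimpleGraph.Walk.length_transfer])
    · refine le_iInf fun i => le_iInf fun a => le_iInf fun w => le_iInf fun hc =>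
        le_iInf fun he => ?_
      have hsub : ∀ f ∈ w.edges, f ∈ (graphSeq G v s r).edgeSet := fun f hf =>
        SimpleGraph.edgeSet_mono (le_graphSeq G v s (by have := i.isLt; omega))
          (w.edges_subset_edgeSet hf)
      have he' : s(s i, v) ∈ (w.transfer _ hsub).edges := by
        rw [SimpleGraph.Walk.edges_transfer]; exact he
      have hv' : v ∈ (w.transfer _ hsub).support :=
        (w.transfer _ hsub).snd_mem_support_of_mem_edges he'
      exact localGirth_le (hc.transfer hsub) hv' |>.trans
        (by rw [SimpleGraph.Walk.length_transfer])
  · refine le_localGirth fun a w hc hv => ?_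
    by_cases hE : ∃ j : Fin r, s(s j, v) ∈ w.edges
    · set T : Finset (Fin r) := Finset.univ.filter (fun j => s(s j, v) ∈ w.edges) with hT
      have hTne : T.Nonempty := by
        obtain ⟨j, hj⟩ := hE
        exact ⟨j, by simp [hT, hj]⟩
      set i := T.max' hTne with hi
      have hiT : i ∈ T := T.max'_mem hTne
      have hie : s(s i, v) ∈ w.edges := by
        simpa [hT] using hiT
      have hsub : ∀ f ∈ w.edges, f ∈ (graphSeq G v s (i.1 + 1)).edgeSet := by
        intro f hf
        induction f with
        | _ x y =>
          have hxy : (graphSeq G v s r).Adj x y := w.edges_subset_edgeSet hf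
          rw [graphSeq_adj] at hxy
          rw [SimpleGraph.mem_edgeSet, graphSeq_adj]
          rcases hxy with hG | ⟨j, hj, heq, hne⟩
          · exact Or.inl hG
          · have hjT : j ∈ T := by
              simp only [hT, Finset.mem_filter, Finset.mem_univ, true_and]
              rw [← heq]; exact hf
            have := T.le_max' j hjT
            exact Or.inr ⟨j, by omega, heq, hne⟩
      have he' : s(s i, v) ∈ (w.transfer _ hsub).edges := by
        rw [SimpleGraph.Walk.edges_transfer]; exact hie
      refine (min_le_right _ _).trans ((iInf_le _ i).trans ?_)
      exact edgeLocalGirth_le (hc.transfer hsub) he' |>.trans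
        (by rw [SimpleGraph.Walk.length_transfer])
    · push_neg at hE
      have hsub : ∀ f ∈ w.edges, f ∈ G.edgeSet := by
        intro f hf
        induction f with
        | _ x y =>
          have hxy : (graphSeq G v s r).Adj x y := w.edges_subset_edgeSet hf
          rw [graphSeq_adj] at hxy
          rcases hxy with hG | ⟨j, hj, heq, hne⟩
          · exact hG
          · exact absurd (heq ▸ hf) (hE j)
      have hv' : v ∈ (w.transfer _ hsub).support := by
        rw [SimpleGraph.Walk.support_transfer]; exact hv
      refine (min_le_left _ _).trans ?_
      exact localGirth_le (hc.transfer hsub) hv' |>.trans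
        (by rw [SimpleGraph.Walk.length_transfer])

theorem part2 (G : SimpleGraph V) (v : V) {r : ℕ}
    (s : Fin r → V) (hs : ValidSeq G v s) (i : Fin r) :
    edgeLocalGirth (graphSeq G v s (i.1 + 1)) s(s i, v) =
      (graphSeq G v s i.1).edist (s i) v + 1 := by
  have hstep : graphSeq G v s (i.1 + 1) = addEdge (graphSeq G v s i.1) (s i) v := by
    rw [show graphSeq G v s (i.1 + 1) =
      if h : i.1 < r then addEdge (graphSeq G v s i.1) (s ⟨i.1, h⟩) v
      else graphSeq G v s i.1 from rfl, dif_pos i.isLt]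
  rw [hstep]
  exact edgeLocalGirth_addEdge _ (hs.2 i).1 (graphSeq_not_adj G v hs i)

/-- For a length-`r` valid sequence `(s_1, …, s_r)` for `v` in `G` with graph
sequence `G_1 = G`, `G_{i+1} = G_i + (s_i, v)`:
`g_v(G_{r+1}) = min(g_v(G), min_{1 ≤ i ≤ r} g_{{s_i,v}}(G_{i+1}))`, and for each `i`,
`g_{{s_i,v}}(G_{i+1}) = dist_{G_i}(s_i, v) + 1`. -/
theorem stmt_3 (G : SimpleGraph V) (v : V) {r : ℕ} (hr : 1 ≤ r)
    (s : Fin r → V) (hs : ValidSeq G v s) :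
    localGirth (graphSeq G v s r) v =
      min (localGirth G v)
        (⨅ i : Fin r, edgeLocalGirth (graphSeq G v s (i.1 + 1)) s(s i, v)) ∧
    ∀ i : Fin r,
      edgeLocalGirth (graphSeq G v s (i.1 + 1)) s(s i, v) =
        (graphSeq G v s i.1).edist (s i) v + 1 := by
  exact ⟨main_eq G v hr s hs, part2 G v s hs⟩
end

section
/- Let G be a simple graph, v a vertex that has no incident edges in G, and r ≥ 1 an integer. Then the r-edge local girth of v satisfies g_v^{(r)}(G) = sup over all length-r valid sequences (s_1,…,s_r) for v of min_{1 ≤ i ≤ r} g_{{s_i,v}}(G_{i+1}), and this also equals the supremum over all such sequences of min_{1 ≤ i ≤ r} ( dist_{G_i}(s_i,v) + 1 ). -/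
open SimpleGraph

variable {V : Type*}

section Aux

variable {r : ℕ} {G : SimpleGraph V} {v : V} {s : Fin r → V}

lemma graphSeq_mono : Monotone (graphSeq G v s) := by
  apply monotone_nat_of_le_succ
  intro n
  rw [graphSeq]
  split
  · exact le_sup_left
  · exact le_rfl

lemma le_graphSeq_s11 (n : ℕ) : G ≤ graphSeq G v s n :=
  graphSeq_mono (Nat.zero_le n)

lemma adj_graphSeq_v (hv : ∀ w : V, ¬ G.Adj v w) (hs : ValidSeq G v s) (n : ℕ) (x : V) :
    (graphSeq G v s n).Adj v x ↔ ∃ j : Fin r, j.1 < n ∧ x = s j := by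
  induction n with
  | zero =>
    simp only [graphSeq]
    constructor
    · intro h; exact absurd h (hv x)
    · rintro ⟨j, hj, -⟩; omega
  | succ n ih =>
    rw [graphSeq]
    split
    · rename_i h
      constructor
      · intro hadj
        rcases hadj with hadj | hadj
        · obtain ⟨j, hj, hx⟩ := ih.mp hadj
          exact ⟨j, by omega, hx⟩
        · rw [fromEdgeSet_adj, Set.mem_singleton_iff, Sym2.eq_iff] at hadj
          rcases hadj.1 with ⟨h1, h2⟩ | ⟨h1, h2⟩
          · exact absurd h1.symm (hs.2 _).1
          · exact ⟨⟨n, h⟩, Nat.lt_succ_self n, h2⟩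
      · rintro ⟨j, hj, rfl⟩
        rcases Nat.lt_succ_iff_lt_or_eq.mp hj with hj | hj
        · exact Or.inl (ih.mpr ⟨j, hj, rfl⟩)
        · refine Or.inr ?_
          rw [fromEdgeSet_adj, Set.mem_singleton_iff]
          have : (⟨n, h⟩ : Fin r) = j := by apply Fin.ext; simp [hj]
          exact ⟨by rw [this, Sym2.eq_swap], fun hvs => (hs.2 j).1 hvs.symm⟩
    · rename_i h
      rw [ih]
      constructor
      · rintro ⟨j, hj, hx⟩; exact ⟨j, by omega, hx⟩
      · rintro ⟨j, hj, hx⟩; exact ⟨j, by omega, hx⟩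

lemma adj_graphSeq_not_v (n : ℕ) {x y : V} (hx : x ≠ v) (hy : y ≠ v) :
    (graphSeq G v s n).Adj x y ↔ G.Adj x y := by
  induction n with
  | zero => rfl
  | succ n ih =>
    rw [graphSeq]
    split
    · constructor
      · intro hadj
        rcases hadj with hadj | hadj
        · exact ih.mp hadj
        · rw [fromEdgeSet_adj, Set.mem_singleton_iff, Sym2.eq_iff] at hadj
          rcases hadj.1 with ⟨h1, h2⟩ | ⟨h1, h2⟩
          · exact absurd h2 hy
          · exact absurd h1 hx
      · intro hadj; exact Or.inl (ih.mpr hadj)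
    · exact ih

lemma edges_subset_G (hv : ∀ w : V, ¬ G.Adj v w) {n : ℕ} {y x : V}
    (t0 : (graphSeq G v s n).Walk y x) (hvt : v ∉ t0.support) :
    ∀ e ∈ t0.edges, e ∈ G.edgeSet := by
  intro e
  induction e using Sym2.ind with
  | _ a b =>
    intro he
    have hE : (graphSeq G v s n).Adj a b := t0.edges_subset_edgeSet he
    have ha : a ∈ t0.support := t0.fst_mem_support_of_mem_edges he
    have hb : b ∈ t0.support := t0.snd_mem_support_of_mem_edges he
    exact (adj_graphSeq_not_v n (fun h => hvt (by subst h; exact ha))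
      (fun h => hvt (by subst h; exact hb))).mp hE

lemma length_rotate {G : SimpleGraph V} [DecidableEq V] {u x : V} (c : G.Walk x x)
    (h : u ∈ c.support) :
    (c.rotate u h).length = c.length := by
  have := congrArg Walk.length (c.take_spec h)
  rw [Walk.length_append] at this
  rw [Walk.rotate, Walk.length_append]
  omega

lemma decomp (hv : ∀ w : V, ¬ G.Adj v w) (hs : ValidSeq G v s) (n : ℕ) {a : V}
    (w : (graphSeq G v s n).Walk a a) (hw : w.IsCycle) (hm : v ∈ w.support) :
    ∃ (i j : Fin r) (t : G.Walk (s i) (s j)), i.1 < n ∧ j.1 < n ∧ i ≠ j ∧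
      t.IsPath ∧ v ∉ t.support ∧ w.length = t.length + 2 ∧
      ∀ e ∈ w.edges, v ∈ e → e = s(v, s i) ∨ e = s(v, s j) := by
  classical
  set w' : (graphSeq G v s n).Walk v v := w.rotate v hm with hw'def
  have hw' : w'.IsCycle := hw.rotate hm
  have hlen : w'.length = w.length := length_rotate w hm
  have hedges : ∀ e, e ∈ w.edges ↔ e ∈ w'.edges :=
    fun e => ((w.rotate_edges v hm).perm.mem_iff).symm
  have h3 := hw'.three_le_length
  have hnn : ¬ w'.Nil := by rw [Walk.nil_iff_length_eq]; omega
  obtain ⟨x, h1, q, hq⟩ := Walk.not_nil_iff.mp hnn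
  rw [hq, Walk.cons_isCycle_iff] at hw'
  obtain ⟨hqp, -⟩ := hw'
  have hqr : q.reverse.IsPath := hqp.reverse
  have hnn2 : ¬ q.reverse.Nil := Walk.not_nil_of_ne h1.ne
  obtain ⟨y, h2, t0, ht0⟩ := Walk.not_nil_iff.mp hnn2
  rw [ht0, Walk.cons_isPath_iff] at hqr
  obtain ⟨ht0p, hvt0⟩ := hqr
  have hlq : q.length = t0.length + 1 := by
    have := congrArg Walk.length ht0
    rwa [Walk.length_reverse, Walk.length_cons] at this
  have hlw : w.length = t0.length + 2 := by
    rw [← hlen, hq, Walk.length_cons]; omega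
  have hxy : x ≠ y := by
    intro h
    subst h
    have ht0nil : t0 = Walk.nil := (Walk.isPath_iff_eq_nil (p := t0)).mp ht0p
    have hlen0 : t0.length = 0 := by rw [ht0nil]; rfl
    omega
  obtain ⟨i, hi, hxi⟩ := (adj_graphSeq_v hv hs n x).mp h1
  obtain ⟨j, hj, hyj⟩ := (adj_graphSeq_v hv hs n y).mp h2
  subst hxi
  subst hyj
  have hij : j ≠ i := fun h => hxy (by rw [h])
  have hsub : ∀ e ∈ t0.edges, e ∈ G.edgeSet := edges_subset_G hv t0 hvt0
  refine ⟨j, i, t0.transfer G hsub, hj, hi, hij, ht0p.transfer hsub, ?_, ?_, ?_⟩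
  · rw [Walk.support_transfer]; exact hvt0
  · rw [Walk.length_transfer]; exact hlw
  · intro e he hve
    rw [hedges, hq, Walk.edges_cons] at he
    rcases List.mem_cons.mp he with he | he
    · exact Or.inr he
    · have he' : e ∈ q.reverse.edges := by rw [Walk.edges_reverse, List.mem_reverse]; exact he
      rw [ht0, Walk.edges_cons] at he'
      rcases List.mem_cons.mp he' with he' | he'
      · exact Or.inl he'
      · exfalso
        induction e using Sym2.ind with
        | _ c d =>
          rcases Sym2.mem_iff.mp hve with h | h
          · subst h; exact hvt0 (t0.fst_mem_support_of_mem_edges he')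
          · subst h; exact hvt0 (t0.snd_mem_support_of_mem_edges he')

lemma construct (hv : ∀ w : V, ¬ G.Adj v w) (hs : ValidSeq G v s) {i j : Fin r}
    (hji : j.1 < i.1) (t : G.Walk (s i) (s j)) (ht : t.IsPath) (htv : v ∉ t.support) :
    ∃ w : (graphSeq G v s (i.1 + 1)).Walk v v,
      w.IsCycle ∧ s(s i, v) ∈ w.edges ∧ w.length = t.length + 2 := by
  have hGE : G ≤ graphSeq G v s (i.1 + 1) := le_graphSeq_s11 _
  have h1 : (graphSeq G v s (i.1 + 1)).Adj v (s i) :=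
    (adj_graphSeq_v hv hs _ _).mpr ⟨i, Nat.lt_succ_self _, rfl⟩
  have h2 : (graphSeq G v s (i.1 + 1)).Adj (s j) v :=
    ((adj_graphSeq_v hv hs _ _).mpr ⟨j, by omega, rfl⟩).symm
  have hsub : ∀ e ∈ t.edges, e ∈ (graphSeq G v s (i.1 + 1)).edgeSet :=
    fun e he => edgeSet_mono hGE (t.edges_subset_edgeSet he)
  refine ⟨Walk.cons h1 ((t.transfer _ hsub).concat h2), ?_, ?_, ?_⟩
  · rw [Walk.cons_isCycle_iff]
    constructor
    · rw [← Walk.isPath_reverse_iff, Walk.reverse_concat, Walk.cons_isPath_iff]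
      refine ⟨(ht.transfer hsub).reverse, ?_⟩
      rw [Walk.support_reverse, List.mem_reverse, Walk.support_transfer]
      exact htv
    · rw [Walk.edges_concat]
      intro hmem
      rw [List.concat_eq_append, List.mem_append, List.mem_singleton] at hmem
      rcases hmem with hmem | hmem
      · rw [Walk.edges_transfer] at hmem
        exact hv (s i) (t.edges_subset_edgeSet hmem)
      · rw [Sym2.eq_iff] at hmem
        rcases hmem with ⟨hc, -⟩ | ⟨-, hc⟩
        · exact (hs.2 j).1 hc.symm
        · exact absurd (Fin.ext (by rw [hs.1 hc]) : i = j) (by intro h; rw [h] at hji; omega)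
  · rw [Walk.edges_cons, Sym2.eq_swap]
    exact List.mem_cons_self
  · rw [Walk.length_cons, Walk.length_concat, Walk.length_transfer]

lemma edist_le_of_walk (hv : ∀ w : V, ¬ G.Adj v w) (hs : ValidSeq G v s) {i j : Fin r}
    (hji : j.1 < i.1) (t : G.Walk (s i) (s j)) :
    (graphSeq G v s i.1).edist (s i) v ≤ t.length + 1 := by
  have hGE : G ≤ graphSeq G v s i.1 := le_graphSeq_s11 _
  have h2 : (graphSeq G v s i.1).Adj (s j) v :=
    ((adj_graphSeq_v hv hs _ _).mpr ⟨j, hji, rfl⟩).symm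
  have hsub : ∀ e ∈ t.edges, e ∈ (graphSeq G v s i.1).edgeSet :=
    fun e he => edgeSet_mono hGE (t.edges_subset_edgeSet he)
  have := SimpleGraph.edist_le ((t.transfer _ hsub).concat h2)
  rwa [Walk.length_concat, Walk.length_transfer, Nat.cast_add, Nat.cast_one] at this

lemma ptI (hv : ∀ w : V, ¬ G.Adj v w) (hs : ValidSeq G v s) (i : Fin r) :
    edgeLocalGirth (graphSeq G v s (i.1 + 1)) s(s i, v)
      = (graphSeq G v s i.1).edist (s i) v + 1 := by
  classical
  apply le_antisymm
  · rcases eq_or_ne ((graphSeq G v s i.1).edist (s i) v) ⊤ with h | h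
    · rw [h]; exact le_top
    · obtain ⟨p, hp⟩ := exists_walk_of_edist_ne_top h
      have hle : graphSeq G v s i.1 ≤ graphSeq G v s (i.1 + 1) :=
        graphSeq_mono (Nat.le_succ _)
      have h1 : (graphSeq G v s (i.1 + 1)).Adj v (s i) :=
        (adj_graphSeq_v hv hs _ _).mpr ⟨i, Nat.lt_succ_self _, rfl⟩
      have hnadj : ¬ (graphSeq G v s i.1).Adj v (s i) := by
        rw [adj_graphSeq_v hv hs]
        rintro ⟨j, hj, hsj⟩
        have : i = j := hs.1 hsj
        omega
      set p' := p.bypass with hp'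
      have hsub : ∀ e ∈ p'.edges, e ∈ (graphSeq G v s (i.1 + 1)).edgeSet :=
        fun e he => edgeSet_mono hle (p'.edges_subset_edgeSet he)
      set c := Walk.cons h1 (p'.transfer _ hsub) with hc
      have hcyc : c.IsCycle := by
        rw [hc, Walk.cons_isCycle_iff]
        refine ⟨(p.bypass_isPath).transfer hsub, ?_⟩
        rw [Walk.edges_transfer]
        intro hmem
        exact hnadj (p'.edges_subset_edgeSet hmem)
      have hmem : s(s i, v) ∈ c.edges := by
        rw [hc, Walk.edges_cons, Sym2.eq_swap]
        exact List.mem_cons_self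
      have hlen : (c.length : ℕ∞) ≤ (graphSeq G v s i.1).edist (s i) v + 1 := by
        rw [hc, Walk.length_cons, Walk.length_transfer, ← hp]
        push_cast
        have : (p'.length : ℕ∞) ≤ (p.length : ℕ∞) := by
          exact_mod_cast Nat.cast_le.mpr p.length_bypass_le
        exact add_le_add_left this 1
      calc edgeLocalGirth (graphSeq G v s (i.1 + 1)) s(s i, v) ≤ (c.length : ℕ∞) :=
            iInf_le_of_le v (iInf_le_of_le c (iInf_le_of_le hcyc (iInf_le_of_le hmem le_rfl)))
        _ ≤ _ := hlen
  · refine le_iInf fun a => le_iInf fun w => le_iInf fun hw => le_iInf fun hmem => ?_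
    have hvsup : v ∈ w.support := w.snd_mem_support_of_mem_edges hmem
    obtain ⟨i', j', t, hi', hj', hij', htp, htv, hlenw, hcl⟩ :=
      decomp hv hs (i.1 + 1) w hw hvsup
    have hwlen : (w.length : ℕ∞) = (t.length : ℕ∞) + 2 := by
      rw [hlenw]; push_cast; ring
    rcases hcl s(s i, v) hmem (Sym2.mem_iff.mpr (Or.inr rfl)) with hc | hc
    · rw [Sym2.eq_iff] at hc
      rcases hc with ⟨hc1, -⟩ | ⟨hc1, -⟩
      · exact absurd hc1 (hs.2 i).1
      · obtain rfl : i = i' := hs.1 hc1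
        have hjlt : j'.1 < i.1 := by
          have : j'.1 ≠ i.1 := fun h => hij'.symm (Fin.ext h)
          omega
        have := edist_le_of_walk hv hs hjlt t
        rw [hwlen]
        calc (graphSeq G v s i.1).edist (s i) v + 1 ≤ ((t.length : ℕ∞) + 1) + 1 :=
              add_le_add_left this 1
          _ = (t.length : ℕ∞) + 2 := by ring
    · rw [Sym2.eq_iff] at hc
      rcases hc with ⟨hc1, -⟩ | ⟨hc1, -⟩
      · exact absurd hc1 (hs.2 i).1
      · obtain rfl : i = j' := hs.1 hc1
        have hjlt : i'.1 < i.1 := by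
          have : i'.1 ≠ i.1 := fun h => hij' (Fin.ext h)
          omega
        have := edist_le_of_walk hv hs hjlt t.reverse
        rw [Walk.length_reverse] at this
        rw [hwlen]
        calc (graphSeq G v s i.1).edist (s i) v + 1 ≤ ((t.length : ℕ∞) + 1) + 1 :=
              add_le_add_left this 1
          _ = (t.length : ℕ∞) + 2 := by ring

lemma ptII (hv : ∀ w : V, ¬ G.Adj v w) (hs : ValidSeq G v s) :
    localGirth (graphSeq G v s r) v
      = ⨅ i : Fin r, edgeLocalGirth (graphSeq G v s (i.1 + 1)) s(s i, v) := by
  apply le_antisymm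
  · refine le_iInf fun i => ?_
    rw [edgeLocalGirth]
    refine le_iInf fun a => le_iInf fun w => le_iInf fun hw => le_iInf fun hmem => ?_
    have hle : graphSeq G v s (i.1 + 1) ≤ graphSeq G v s r := graphSeq_mono i.isLt
    have hsub : ∀ e ∈ w.edges, e ∈ (graphSeq G v s r).edgeSet :=
      fun e he => edgeSet_mono hle (w.edges_subset_edgeSet he)
    have hcyc := hw.transfer hsub
    have hvsup : v ∈ (w.transfer _ hsub).support := by
      rw [Walk.support_transfer]
      exact w.snd_mem_support_of_mem_edges hmem
    calc localGirth (graphSeq G v s r) v ≤ ((w.transfer _ hsub).length : ℕ∞) :=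
          iInf_le_of_le a (iInf_le_of_le (w.transfer _ hsub)
            (iInf_le_of_le hcyc (iInf_le_of_le hvsup le_rfl)))
      _ = (w.length : ℕ∞) := by rw [Walk.length_transfer]
  · rw [localGirth]
    refine le_iInf fun a => le_iInf fun w => le_iInf fun hw => le_iInf fun hm => ?_
    obtain ⟨i', j', t, hi', hj', hij', htp, htv, hlenw, -⟩ := decomp hv hs r w hw hm
    have hwlen : (w.length : ℕ∞) = (t.length : ℕ∞) + 2 := by
      rw [hlenw]; push_cast; ring
    have hne : i'.1 ≠ j'.1 := fun h => hij' (Fin.ext h)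
    rcases lt_or_gt_of_ne hne with hlt | hlt
    · obtain ⟨c, hc, hce, hclen⟩ := construct hv hs hlt t.reverse htp.reverse
        (by rw [Walk.support_reverse, List.mem_reverse]; exact htv)
      calc (⨅ k : Fin r, edgeLocalGirth (graphSeq G v s (k.1 + 1)) s(s k, v))
          ≤ edgeLocalGirth (graphSeq G v s (j'.1 + 1)) s(s j', v) := iInf_le _ j'
        _ ≤ (c.length : ℕ∞) :=
            iInf_le_of_le v (iInf_le_of_le c (iInf_le_of_le hc (iInf_le_of_le hce le_rfl)))
        _ = (w.length : ℕ∞) := by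
            rw [hclen, Walk.length_reverse, hwlen]; push_cast; ring
    · obtain ⟨c, hc, hce, hclen⟩ := construct hv hs hlt t htp htv
      calc (⨅ k : Fin r, edgeLocalGirth (graphSeq G v s (k.1 + 1)) s(s k, v))
          ≤ edgeLocalGirth (graphSeq G v s (i'.1 + 1)) s(s i', v) := iInf_le _ i'
        _ ≤ (c.length : ℕ∞) :=
            iInf_le_of_le v (iInf_le_of_le c (iInf_le_of_le hc (iInf_le_of_le hce le_rfl)))
        _ = (w.length : ℕ∞) := by rw [hclen, hwlen]; push_cast; ring

end Aux

/-- If `v` has no incident edges in `G` and `r ≥ 1`, then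
`g_v^{(r)}(G) = sup_s min_{1 ≤ i ≤ r} g_{{s_i,v}}(G_{i+1})`, and this also equals
`sup_s min_{1 ≤ i ≤ r} (dist_{G_i}(s_i,v) + 1)`, suprema over all length-`r` valid
sequences `s` for `v`. -/
theorem stmt_11 (G : SimpleGraph V) (v : V) (hv : ∀ w : V, ¬ G.Adj v w)
    {r : ℕ} (hr : 1 ≤ r) :
    multiEdgeLocalGirth G v r =
      (⨆ (s : Fin r → V) (_ : ValidSeq G v s),
        ⨅ i : Fin r, edgeLocalGirth (graphSeq G v s (i.1 + 1)) s(s i, v)) ∧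
    multiEdgeLocalGirth G v r =
      ⨆ (s : Fin r → V) (_ : ValidSeq G v s),
        ⨅ i : Fin r, ((graphSeq G v s i.1).edist (s i) v + 1) := by
  constructor
  · simp only [multiEdgeLocalGirth]
    refine iSup_congr fun s => ?_
    by_cases hs : ValidSeq G v s
    · rw [iSup_pos hs, iSup_pos hs]
      exact ptII hv hs
    · rw [iSup_neg hs, iSup_neg hs]
  · simp only [multiEdgeLocalGirth]
    refine iSup_congr fun s => ?_
    by_cases hs : ValidSeq G v s
    · rw [iSup_pos hs, iSup_pos hs, ptII hv hs]
      exact iInf_congr fun i => ptI hv hs i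
    · rw [iSup_neg hs, iSup_neg hs]
end

section
/- Let G be a simple graph and let c, v be distinct vertices with ¬G.Adj c v, and assume dist_G(c,v) + 1 ≤ g_v(G). Then in the graph G+(c,v), the local girth of v equals the infimum of the lengths of cycles containing the edge {c,v}, and both equal dist_G(c,v) + 1; that is, adding the edge {c,v} makes v attain the local girth dist_G(c,v) + 1. -/
open SimpleGraph

variable {V : Type*}

/-- If `c ≠ v` are non-adjacent in `G` and `dist_G(c,v) + 1 ≤ g_v(G)`,
then in `G+(c,v)` the local girth of `v` equals the infimum of the lengths of cycles
containing the edge `{c,v}`, and both equal `dist_G(c,v) + 1`. -/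
theorem stmt_13 (G : SimpleGraph V) (c v : V) (hne : c ≠ v) (hadj : ¬ G.Adj c v)
    (hg : G.edist c v + 1 ≤ localGirth G v) :
    localGirth (addEdge G c v) v = edgeLocalGirth (addEdge G c v) s(c, v) ∧
    edgeLocalGirth (addEdge G c v) s(c, v) = G.edist c v + 1 := by
  classical
  set G' := addEdge G c v with hG'
  have hle : G ≤ G' := le_sup_left
  have hedge : ∀ e ∈ G'.edgeSet, e ∈ G.edgeSet ∨ e = s(c, v) := by
    intro e he
    rw [hG', addEdge, edgeSet_sup, Set.mem_union, edgeSet_fromEdgeSet] at he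
    rcases he with h | h
    · exact Or.inl h
    · exact Or.inr h.1
  -- lower bound: every cycle of G' through v has length ≥ edist + 1
  have hlow : ∀ (a : V) (w : G'.Walk a a), w.IsCycle → v ∈ w.support →
      G.edist c v + 1 ≤ (w.length : ℕ∞) := by
    intro a w hw hv
    by_cases hcv : s(c, v) ∈ w.edges
    · have hc : c ∈ w.support := w.fst_mem_support_of_mem_edges hcv
      set q := w.rotate c hc with hqdef
      have hqc : q.IsCycle := hw.rotate hc
      have hqperm : q.edges.Perm w.edges := (w.rotate_edges c hc).perm
      have hqe : s(c, v) ∈ q.edges := hqperm.mem_iff.mpr hcv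
      have hqlen : q.length = w.length := by
        rw [← Walk.length_edges, ← Walk.length_edges, hqperm.length_eq]
      have hqv : v ∈ q.support := q.snd_mem_support_of_mem_edges hqe
      have hnd : q.edges.Nodup := hqc.edges_nodup
      have hspec := q.take_spec hqv
      set t := q.takeUntil v hqv with htdef
      set d := q.dropUntil v hqv with hddef
      have hlen : t.length + d.length = q.length := by
        rw [← hspec, Walk.length_append]
      have hedges : q.edges = t.edges ++ d.edges := by
        rw [← hspec, Walk.edges_append]
      rw [hedges] at hnd hqe
      have hdisj := List.disjoint_of_nodup_append hnd
      rcases List.mem_append.mp hqe with h1 | h2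
      · have hnotd : s(c, v) ∉ d.edges := fun h => hdisj h1 h
        have htr : ∀ e ∈ d.edges, e ∈ G.edgeSet := by
          intro e he
          rcases hedge e (d.edges_subset_edgeSet he) with h | h
          · exact h
          · exact absurd (h ▸ he) hnotd
        have hdist : G.edist c v ≤ (d.length : ℕ∞) := by
          have := SimpleGraph.edist_le ((d.transfer G htr).reverse)
          simpa [SimpleGraph.edist_comm] using SimpleGraph.edist_le (d.transfer G htr)
        have ht1 : 1 ≤ t.length := by
          rcases Nat.eq_zero_or_pos t.length with h0 | h0
          · rw [← Walk.length_edges, List.length_eq_zero_iff] at h0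
            rw [h0] at h1; simp at h1
          · exact h0
        calc G.edist c v + 1 ≤ (d.length : ℕ∞) + (t.length : ℕ∞) := by
              exact add_le_add hdist (by exact_mod_cast ht1)
          _ = ((t.length + d.length : ℕ) : ℕ∞) := by push_cast; ring
          _ = (w.length : ℕ∞) := by rw [hlen, hqlen]
      · have hnott : s(c, v) ∉ t.edges := fun h => hdisj h h2
        have htr : ∀ e ∈ t.edges, e ∈ G.edgeSet := by
          intro e he
          rcases hedge e (t.edges_subset_edgeSet he) with h | h
          · exact h
          · exact absurd (h ▸ he) hnott
        have hdist : G.edist c v ≤ (t.length : ℕ∞) := by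
          simpa using SimpleGraph.edist_le (t.transfer G htr)
        have hd1 : 1 ≤ d.length := by
          rcases Nat.eq_zero_or_pos d.length with h0 | h0
          · rw [← Walk.length_edges, List.length_eq_zero_iff] at h0
            rw [h0] at h2; simp at h2
          · exact h0
        calc G.edist c v + 1 ≤ (t.length : ℕ∞) + (d.length : ℕ∞) := by
              exact add_le_add hdist (by exact_mod_cast hd1)
          _ = ((t.length + d.length : ℕ) : ℕ∞) := by push_cast; ring
          _ = (w.length : ℕ∞) := by rw [hlen, hqlen]
    · -- cycle avoids the new edge: it lives in G
      have htr : ∀ e ∈ w.edges, e ∈ G.edgeSet := by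
        intro e he
        rcases hedge e (w.edges_subset_edgeSet he) with h | h
        · exact h
        · exact absurd (h ▸ he) hcv
      have hwc : (w.transfer G htr).IsCycle := hw.transfer htr
      have hwv : v ∈ (w.transfer G htr).support := by
        rwa [Walk.support_transfer]
      have hloc : localGirth G v ≤ ((w.transfer G htr).length : ℕ∞) := by
        exact iInf_le_of_le a (iInf_le_of_le (w.transfer G htr)
          (iInf_le_of_le hwc (iInf_le_of_le hwv le_rfl)))
      calc G.edist c v + 1 ≤ localGirth G v := hg
        _ ≤ ((w.transfer G htr).length : ℕ∞) := hloc
        _ = (w.length : ℕ∞) := by rw [Walk.length_transfer]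
  have hLlow : G.edist c v + 1 ≤ localGirth G' v := by
    refine le_iInf fun a => le_iInf fun w => le_iInf fun hc => le_iInf fun hv => ?_
    exact hlow a w hc hv
  have hLE : localGirth G' v ≤ edgeLocalGirth G' s(c, v) := by
    refine le_iInf fun a => le_iInf fun w => le_iInf fun hc => le_iInf fun he => ?_
    exact iInf_le_of_le a (iInf_le_of_le w (iInf_le_of_le hc
      (iInf_le_of_le (w.snd_mem_support_of_mem_edges he) le_rfl)))
  have hEup : edgeLocalGirth G' s(c, v) ≤ G.edist c v + 1 := by
    by_cases hr : G.Reachable c v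
    · obtain ⟨p, hp⟩ := hr.exists_walk_length_eq_edist
      set p' := p.bypass with hp'def
      have hp'path : p'.IsPath := p.bypass_isPath
      have hlen' : (p'.length : ℕ∞) = G.edist c v := by
        refine le_antisymm ?_ (SimpleGraph.edist_le p')
        rw [← hp]
        exact_mod_cast p.length_bypass_le
      have htr : ∀ e ∈ p'.edges, e ∈ G'.edgeSet := by
        intro e he
        exact SimpleGraph.edgeSet_mono hle (p'.edges_subset_edgeSet he)
      set pt := p'.transfer G' htr with hptdef
      have hadj' : G'.Adj v c := by
        refine Or.inr ?_
        rw [fromEdgeSet_adj]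
        exact ⟨by rw [Sym2.eq_swap]; rfl, hne.symm⟩
      have hC : (Walk.cons hadj' pt).IsCycle := by
        rw [Walk.cons_isCycle_iff]
        refine ⟨hp'path.transfer htr, fun h => ?_⟩
        have : s(v, c) ∈ p'.edges := by rwa [Walk.edges_transfer] at h
        have := p'.edges_subset_edgeSet this
        rw [Sym2.eq_swap] at this
        exact hadj this
      have hCe : s(c, v) ∈ (Walk.cons hadj' pt).edges := by
        rw [Walk.edges_cons]
        exact List.mem_cons.mpr (Or.inl Sym2.eq_swap)
      refine le_trans (iInf_le_of_le v (iInf_le_of_le (Walk.cons hadj' pt)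
        (iInf_le_of_le hC (iInf_le_of_le hCe le_rfl)))) ?_
      rw [Walk.length_cons, Walk.length_transfer]
      push_cast
      rw [hlen']
    · rw [SimpleGraph.edist_eq_top_of_not_reachable hr]
      simp
  exact ⟨le_antisymm hLE (hEup.trans hLlow), le_antisymm hEup (hLlow.trans hLE)⟩
end

section
/- Let N, J, K be positive integers and let p : Fin J → Fin K → Option (ZMod N). Let G_p be the simple graph on the vertex type (Fin J × ZMod N) ⊕ (Fin K × ZMod N) in which a left vertex (i,a) is adjacent to a right vertex (j,b) if and only if p i j = some (b − a), and there are no other adjacencies. Then for every i : Fin J, j : Fin K, and t : ZMod N with p i j = some t, and every pair of distinct elements a, a' : ZMod N, every cycle of G_p that contains both the edge {(i,a),(j,a+t)} and the edge {(i,a'),(j,a'+t)} has length at least 8. -/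
open SimpleGraph

/-- The Tanner graph of a quasi-cyclic LDPC code whose parity-check matrix is a
`J × K` array of `N × N` circulants, each of which is either a circulant permutation
matrix (CPM) or the zero circulant: a left (check-node) vertex `(i, a)` is adjacent to a
right (variable-node) vertex `(j, b)` iff `p i j = some (b - a)`, and there are no other
adjacencies (`p i j = none` means the zero circulant in block `(i, j)`). -/
def cpmGraph {J K N : ℕ} (p : Fin J → Fin K → Option (ZMod N)) :
    SimpleGraph ((Fin J × ZMod N) ⊕ (Fin K × ZMod N)) where
  Adj x y :=
    match x, y with
    | .inl (i, a), .inr (j, b) => p i j = some (b - a)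
    | .inr (j, b), .inl (i, a) => p i j = some (b - a)
    | _, _ => False
  symm := by
    constructor
    intro x y h
    match x, y with
    | .inl (i, a), .inr (j, b) => exact h
    | .inr (j, b), .inl (i, a) => exact h
  loopless := by
    constructor
    intro x h
    match x with
    | .inl (i, a) => exact h
    | .inr (j, b) => exact h

lemma cpm_adj_sides {J K N : ℕ} {p : Fin J → Fin K → Option (ZMod N)} {u v}
    (h : (cpmGraph p).Adj u v) : u.isLeft = !v.isLeft := by
  match u, v with
  | .inl _, .inr _ => rfl
  | .inr _, .inl _ => rfl
  | .inl _, .inl _ => exact absurd h (by simp [cpmGraph])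
  | .inr _, .inr _ => exact absurd h (by simp [cpmGraph])

lemma cpm_parity {J K N : ℕ} {p : Fin J → Fin K → Option (ZMod N)} :
    ∀ {u v} (w : (cpmGraph p).Walk u v), Even w.length ↔ (u.isLeft = v.isLeft) := by
  intro u v w
  induction w with
  | nil => simp
  | cons h w ih =>
    rw [Walk.length_cons, Nat.even_add_one, ih, cpm_adj_sides h]
    cases Sum.isLeft _ <;> cases Sum.isLeft _ <;> simp

section
variable {J K N : ℕ} {p : Fin J → Fin K → Option (ZMod N)}

@[simp] lemma adj_ll {u v : Fin J × ZMod N} :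
    ¬ (cpmGraph p).Adj (Sum.inl u) (Sum.inl v) := fun h => h
@[simp] lemma adj_rr {u v : Fin K × ZMod N} :
    ¬ (cpmGraph p).Adj (Sum.inr u) (Sum.inr v) := fun h => h
@[simp] lemma adj_lr {i : Fin J} {a : ZMod N} {j : Fin K} {b : ZMod N} :
    (cpmGraph p).Adj (Sum.inl (i,a)) (Sum.inr (j,b)) ↔ p i j = some (b - a) := Iff.rfl
@[simp] lemma adj_rl {i : Fin J} {a : ZMod N} {j : Fin K} {b : ZMod N} :
    (cpmGraph p).Adj (Sum.inr (j,b)) (Sum.inl (i,a)) ↔ p i j = some (b - a) := Iff.rfl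

lemma zL1 {a a' t c : ZMod N} : (a + t - c = a' + t - c) ↔ (a = a') := by
  constructor
  · intro h; linear_combination h
  · rintro rfl; rfl
lemma zL2 {a a' t : ZMod N} : (t = a + t - a') ↔ (a' = a) := by
  constructor
  · intro h; linear_combination h
  · rintro rfl; simp
lemma zL3 {a a' t : ZMod N} : (a + t - a' = t) ↔ (a' = a) := by
  constructor
  · intro h; linear_combination -h
  · rintro rfl; simp

lemma no4 {i : Fin J} {j : Fin K} {t : ZMod N}
    (hp : p i j = some t) {a a' : ZMod N} (haa : a ≠ a')
    {x : (Fin J × ZMod N) ⊕ (Fin K × ZMod N)} (w : (cpmGraph p).Walk x x)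
    (hlen : w.length = 4)
    (h1 : s(Sum.inl (i, a), Sum.inr (j, a + t)) ∈ w.edges)
    (h2 : s(Sum.inl (i, a'), Sum.inr (j, a' + t)) ∈ w.edges) : False := by
  have haa' : a' ≠ a := haa.symm
  obtain - | ⟨a1, w⟩ := w; · simp at hlen
  obtain - | ⟨a2, w⟩ := w; · simp at hlen
  obtain - | ⟨a3, w⟩ := w; · simp at hlen
  obtain - | ⟨a4, w⟩ := w; · simp at hlen
  obtain - | ⟨a5, w⟩ := w
  · rename_i v1 v2 v3
    rcases x with ⟨xi, xa⟩ | ⟨xj, xb⟩ <;> rcases v1 with ⟨i1, b1⟩ | ⟨j1, c1⟩ <;>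
      rcases v2 with ⟨i2, b2⟩ | ⟨j2, c2⟩ <;> rcases v3 with ⟨i3, b3⟩ | ⟨j3, c3⟩
    all_goals try simp only [adj_ll, adj_rr, adj_lr, adj_rl] at a1 a2 a3 a4
    all_goals simp only [Walk.edges_cons, Walk.edges_nil, List.mem_cons, List.not_mem_nil,
      or_false, Sym2.eq_iff, Sum.inl.injEq, Sum.inr.injEq, Prod.mk.injEq, false_and, and_false,
      false_or, or_false] at h1 h2
    all_goals rcases h1 with ⟨⟨rfl,rfl⟩,rfl,rfl⟩|⟨⟨rfl,rfl⟩,rfl,rfl⟩|⟨⟨rfl,rfl⟩,rfl,rfl⟩|⟨⟨rfl,rfl⟩,rfl,rfl⟩ <;>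
      rcases h2 with ⟨⟨e1,e2⟩,e3,e4⟩|⟨⟨e1,e2⟩,e3,e4⟩|⟨⟨e1,e2⟩,e3,e4⟩|⟨⟨e1,e2⟩,e3,e4⟩ <;>
      simp_all [zL1, zL2, zL3]
  · simp at hlen
end

section
variable {J K N : ℕ} {p : Fin J → Fin K → Option (ZMod N)}

lemma no6 {i : Fin J} {j : Fin K} {t : ZMod N}
    (hp : p i j = some t) {a a' : ZMod N} (haa : a ≠ a')
    {x : (Fin J × ZMod N) ⊕ (Fin K × ZMod N)} (w : (cpmGraph p).Walk x x)
    (hlen : w.length = 6)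
    (h1 : s(Sum.inl (i, a), Sum.inr (j, a + t)) ∈ w.edges)
    (h2 : s(Sum.inl (i, a'), Sum.inr (j, a' + t)) ∈ w.edges) : False := by
  have haa' : a' ≠ a := haa.symm
  obtain - | ⟨a1, w⟩ := w; · simp at hlen
  obtain - | ⟨a2, w⟩ := w; · simp at hlen
  obtain - | ⟨a3, w⟩ := w; · simp at hlen
  obtain - | ⟨a4, w⟩ := w; · simp at hlen
  obtain - | ⟨a5, w⟩ := w; · simp at hlen
  obtain - | ⟨a6, w⟩ := w; · simp at hlen
  obtain - | ⟨a7, w⟩ := w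
  · rename_i v1 v2 v3 v4 v5
    rcases x with ⟨xi, xa⟩ | ⟨xj, xb⟩ <;> rcases v1 with ⟨i1, b1⟩ | ⟨j1, c1⟩ <;>
      rcases v2 with ⟨i2, b2⟩ | ⟨j2, c2⟩ <;> rcases v3 with ⟨i3, b3⟩ | ⟨j3, c3⟩ <;>
      rcases v4 with ⟨i4, b4⟩ | ⟨j4, c4⟩ <;> rcases v5 with ⟨i5, b5⟩ | ⟨j5, c5⟩
    all_goals try simp only [adj_ll, adj_rr, adj_lr, adj_rl] at a1 a2 a3 a4 a5 a6
    all_goals simp only [Walk.edges_cons, Walk.edges_nil, List.mem_cons, List.not_mem_nil,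
      or_false, Sym2.eq_iff, Sum.inl.injEq, Sum.inr.injEq, Prod.mk.injEq, false_and, and_false,
      false_or, or_false] at h1 h2
    all_goals
      rcases h1 with ⟨⟨rfl,rfl⟩,rfl,rfl⟩|⟨⟨rfl,rfl⟩,rfl,rfl⟩|⟨⟨rfl,rfl⟩,rfl,rfl⟩|⟨⟨rfl,rfl⟩,rfl,rfl⟩|⟨⟨rfl,rfl⟩,rfl,rfl⟩|⟨⟨rfl,rfl⟩,rfl,rfl⟩ <;>
      rcases h2 with ⟨⟨e1,e2⟩,e3,e4⟩|⟨⟨e1,e2⟩,e3,e4⟩|⟨⟨e1,e2⟩,e3,e4⟩|⟨⟨e1,e2⟩,e3,e4⟩|⟨⟨e1,e2⟩,e3,e4⟩|⟨⟨e1,e2⟩,e3,e4⟩ <;>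
      simp_all [zL1, zL2, zL3]
  · simp at hlen
end

/-- For positive `N, J, K` and `p : Fin J → Fin K → Option (ZMod N)`,
if `p i j = some t` and `a ≠ a'`, then every cycle of `cpmGraph p` containing both
edges `{(i,a), (j,a+t)}` and `{(i,a'), (j,a'+t)}` (two distinct edges of the same CPM
block `(i,j)`) has length at least `8`. -/
theorem stmt_15 {J K N : ℕ} (hJ : 0 < J) (hK : 0 < K) (hN : 0 < N)
    (p : Fin J → Fin K → Option (ZMod N)) (i : Fin J) (j : Fin K) (t : ZMod N)
    (hp : p i j = some t) (a a' : ZMod N) (haa : a ≠ a')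
    (x : (Fin J × ZMod N) ⊕ (Fin K × ZMod N)) (w : (cpmGraph p).Walk x x)
    (hw : w.IsCycle)
    (h1 : s(Sum.inl (i, a), Sum.inr (j, a + t)) ∈ w.edges)
    (h2 : s(Sum.inl (i, a'), Sum.inr (j, a' + t)) ∈ w.edges) :
    8 ≤ w.length := by

  by_contra hlt
  push_neg at hlt
  have hev : Even w.length := (cpm_parity w).mpr rfl
  have h3 := hw.three_le_length
  obtain ⟨k, hk⟩ := hev
  have h46 : w.length = 4 ∨ w.length = 6 := by omega
  rcases h46 with h | h
  · exact (no4 hp haa w h h1 h2).elim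
  · exact (no6 hp haa w h h1 h2).elim
end
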